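/- A semiprime ring R is a right fs-ring with finite right hollow dimension if and only if R is semisimple. -/

import Mathlib

/-- A submodule `N` of `M` is small (superfluous): `N + A = M` implies `A = M`. -/
def IsSmallSubmodule {R M : Type*} [Ring R] [AddCommGroup M] [Module R M]
    (N : Submodule R M) : Prop :=
  ∀ A : Submodule R M, N ⊔ A = ⊤ → A = ⊤

/-- `M` is an fs-module: it has only finitely many small submodules. -/
def IsFsModule (R M : Type*) [Ring R] [AddCommGroup M] [Module R M] : Prop :=
  {N : Submodule R M | IsSmallSubmodule N}.Finite

/-- The radical of `M`, as the sum of all small submodules of `M`. -/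
def modRad (R M : Type*) [Ring R] [AddCommGroup M] [Module R M] : Submodule R M :=
  sSup {N : Submodule R M | IsSmallSubmodule N}

/-- The radical of `M`, as the intersection of all maximal submodules of `M`. -/
def modRad' (R M : Type*) [Ring R] [AddCommGroup M] [Module R M] : Submodule R M :=
  sInf {N : Submodule R M | IsCoatom N}

/-- The socle of `M`: the sum of all minimal (simple) submodules of `M`. -/
def modSoc (R M : Type*) [Ring R] [AddCommGroup M] [Module R M] : Submodule R M :=
  sSup {N : Submodule R M | IsAtom N}

/-- `M` has finite hollow dimension: for every descending chain `N₁ ⊇ N₂ ⊇ ⋯`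
there is `n` such that `Nₙ / N_k` is small in `M / N_k` for all `k ≥ n`. -/
def HasFiniteHollowDim (R M : Type*) [Ring R] [AddCommGroup M] [Module R M] : Prop :=
  ∀ N : ℕ → Submodule R M, (∀ i j, i ≤ j → N j ≤ N i) →
    ∃ n, ∀ k, n ≤ k → IsSmallSubmodule (Submodule.map (N k).mkQ (N n))

/-- `M` has finite Goldie dimension: it contains no infinite direct sum of
nonzero submodules. -/
def HasFiniteGoldieDim (R M : Type*) [Ring R] [AddCommGroup M] [Module R M] : Prop :=
  ¬ ∃ f : ℕ → Submodule R M, (∀ i, f i ≠ ⊥) ∧ iSupIndep f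

open MulOpposite Submodule

section SmallLemmas
variable {R M : Type*} [Ring R] [AddCommGroup M] [Module R M]

lemma isSmall_bot : IsSmallSubmodule (⊥ : Submodule R M) := fun A hA => by simpa using hA

lemma isSmall_of_le {N N' : Submodule R M} (h : N ≤ N') (h' : IsSmallSubmodule N') :
    IsSmallSubmodule N := fun A hA =>
  h' A (top_le_iff.mp (hA ▸ sup_le_sup_right h A))

lemma isSmall_sup {N N' : Submodule R M} (h : IsSmallSubmodule N) (h' : IsSmallSubmodule N') :
    IsSmallSubmodule (N ⊔ N') := fun A hA =>
  h' A (h (N' ⊔ A) (by rwa [← sup_assoc]))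

lemma isSmall_sSup {s : Set (Submodule R M)} (hs : s.Finite)
    (h : ∀ N ∈ s, IsSmallSubmodule N) : IsSmallSubmodule (sSup s) := by
  revert h
  refine Set.Finite.induction_on s hs (fun _ => by simpa using isSmall_bot) ?_
  intro a s _ _ ih h
  rw [sSup_insert]
  exact isSmall_sup (h a (Set.mem_insert _ _))
    (ih fun N hN => h N (Set.mem_insert_of_mem _ hN))

/-- The image of an atom under a linear map is an atom or `⊥`. -/
lemma map_atom_or_bot {M₂ : Type*} [AddCommGroup M₂] [Module R M₂] (f : M →ₗ[R] M₂)
    {L : Submodule R M} (hL : IsAtom L) :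
    Submodule.map f L = ⊥ ∨ IsAtom (Submodule.map f L) := by
  by_cases hbot : Submodule.map f L = ⊥
  · exact Or.inl hbot
  · refine Or.inr ⟨hbot, fun N hN => ?_⟩
    have hne : L ⊓ comap f N ≠ L := by
      rintro hh
      exact hN.ne (le_antisymm hN.le (map_le_iff_le_comap.mpr (hh ▸ inf_le_right)))
    have hK : L ⊓ comap f N = ⊥ := hL.2 _ (lt_of_le_of_ne inf_le_left hne)
    rw [eq_bot_iff]
    rintro x hx
    obtain ⟨y, hy, rfl⟩ := hN.le hx
    have : y ∈ L ⊓ comap f N := ⟨hy, hx⟩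
    rw [hK] at this
    simp [show y = 0 from this]

/-- A simple module is semisimple. -/
lemma isSemisimple_of_isSimple (h : IsSimpleModule R M) : IsSemisimpleModule R M := by
  apply IsSemisimpleModule.of_sSup_simples_eq_top
  rw [eq_top_iff]
  refine le_sSup ?_
  exact (IsSimpleModule.congr Submodule.topEquiv : IsSimpleModule R (⊤ : Submodule R M))

end SmallLemmas

section Pi

variable {S : Type*} [Ring S]

lemma isSemisimple_pi {ι : Type*} [Finite ι] (M : ι → Type*)
    [∀ i, AddCommGroup (M i)] [∀ i, Module S (M i)]
    (h : ∀ i, IsSemisimpleModule S (M i)) : IsSemisimpleModule S (∀ i, M i) := by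
  classical
  cases nonempty_fintype ι
  refine isSemisimpleModule_of_isSemisimpleModule_submodule'
    (p := fun i => LinearMap.range (LinearMap.single S M i)) (fun i => ?_)
    (LinearMap.iSup_range_single S M)
  haveI := h i
  exact IsSemisimpleModule.congr (LinearEquiv.ofInjective _ (Pi.single_injective (M := M) i)).symm

end Pi

section Op
variable (R : Type*) [Ring R]

/-- `R` as a right module over itself is the same as `Rᵐᵒᵖ` as a left module over itself. -/
def opEquiv : R ≃ₗ[Rᵐᵒᵖ] Rᵐᵒᵖ where
  toFun := op
  invFun := unop
  map_add' := by simp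
  map_smul' := fun c r => by
    induction c using MulOpposite.rec' with
    | h c => simp [op_smul_eq_mul]
  left_inv := fun _ => rfl
  right_inv := fun _ => rfl

/-- The ring `R` is isomorphic to its double opposite. -/
def ringEquivOpOp : R ≃+* Rᵐᵒᵖᵐᵒᵖ :=
  { MulEquiv.opOp R with map_add' := fun _ _ => rfl }

variable {R}

/-- Left multiplication as an `Rᵐᵒᵖ`-linear endomorphism of `R`. -/
def lmulHom (a : R) : R →ₗ[Rᵐᵒᵖ] R where
  toFun := (a * ·)
  map_add' := mul_add a
  map_smul' := fun c r => by
    induction c using MulOpposite.rec' with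
    | h c => simp [op_smul_eq_mul, mul_assoc]

@[simp] lemma lmulHom_apply (a x : R) : lmulHom a x = a * x := rfl

/-- Right multiplication as an `R`-linear endomorphism of `R`. -/
def rmulHom (a : R) : R →ₗ[R] R where
  toFun := (· * a)
  map_add' := fun x y => add_mul x y a
  map_smul' := fun c r => by simp [smul_eq_mul, mul_assoc]

@[simp] lemma rmulHom_apply (a x : R) : rmulHom a x = x * a := rfl

lemma span_one_eq_top : span Rᵐᵒᵖ ({1} : Set R) = ⊤ := by
  rw [eq_top_iff]; intro x _
  exact mem_span_singleton.mpr ⟨op x, by simp [op_smul_eq_mul]⟩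

lemma eq_top_of_one_mem {N : Submodule Rᵐᵒᵖ R} (h : (1 : R) ∈ N) : N = ⊤ := by
  rw [eq_top_iff']
  intro x
  simpa [op_smul_eq_mul] using N.smul_mem (op x) h

/-- The product of two right ideals. -/
def rmul (A B : Submodule Rᵐᵒᵖ R) : Submodule Rᵐᵒᵖ R :=
  span Rᵐᵒᵖ (Set.image2 (· * ·) (A : Set R) (B : Set R))

lemma mul_mem_rmul {A B : Submodule Rᵐᵒᵖ R} {a b : R} (ha : a ∈ A) (hb : b ∈ B) :
    a * b ∈ rmul A B :=
  subset_span (Set.mem_image2.mpr ⟨a, ha, b, hb, rfl⟩)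

lemma rmul_le {A B C : Submodule Rᵐᵒᵖ R} (h : ∀ a ∈ A, ∀ b ∈ B, a * b ∈ C) :
    rmul A B ≤ C := by
  rw [rmul, span_le]
  rintro x ⟨a, ha, b, hb, rfl⟩
  exact h a ha b hb

lemma rmul_le_left {A B : Submodule Rᵐᵒᵖ R} : rmul A B ≤ A :=
  rmul_le fun a ha b _ => by
    simpa [op_smul_eq_mul] using A.smul_mem (op b) ha

lemma rmul_map_lmul (a : R) (B C : Submodule Rᵐᵒᵖ R) :
    rmul (Submodule.map (lmulHom a) B) C = Submodule.map (lmulHom a) (rmul B C) := by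
  rw [rmul, rmul, Submodule.map_span]
  congr 1
  ext x
  constructor
  · rintro ⟨y, ⟨b, hb, rfl⟩, c, hc, rfl⟩
    exact ⟨b * c, Set.mem_image2.mpr ⟨b, hb, c, hc, rfl⟩, (mul_assoc a b c).symm⟩
  · rintro ⟨y, hy, rfl⟩
    obtain ⟨b, hb, c, hc, rfl⟩ := Set.mem_image2.mp hy
    exact Set.mem_image2.mpr ⟨a * b, ⟨b, hb, rfl⟩, c, hc, mul_assoc a b c⟩

end Op
section Sym
variable {R : Type*} [Ring R]

lemma exists_left_inv (hsp : ∀ a : R, (∀ b : R, a * b * a = 0) → a = 0)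
    {e u : R} (he : e * e = e) (hatom : IsAtom (span R ({e} : Set R)))
    (hu : ∃ s : R, u = e * s * e) (hu0 : u ≠ 0) :
    ∃ w : R, (∃ s : R, w = e * s * e) ∧ w * u = e := by
  obtain ⟨s, rfl⟩ := hu
  have hmem : e * s * e ∈ span R ({e} : Set R) := by
    have h1 : e * s * e = (e * s) • e := by simp [smul_eq_mul]
    rw [h1]
    exact Submodule.smul_mem _ _ (Submodule.mem_span_singleton_self e)
  have hspan : span R ({e * s * e} : Set R) = span R ({e} : Set R) := by
    rcases lt_or_eq_of_le (span_le.mpr (Set.singleton_subset_iff.mpr hmem)) with hlt | h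
    · exact absurd (span_singleton_eq_bot.mp (hatom.2 _ hlt)) hu0
    · exact h
  have he_mem : e ∈ span R ({e * s * e} : Set R) :=
    hspan ▸ Submodule.mem_span_singleton_self e
  obtain ⟨c, hc⟩ := Submodule.mem_span_singleton.mp he_mem
  rw [smul_eq_mul] at hc
  refine ⟨e * c * e, ⟨c, rfl⟩, ?_⟩
  have heu : e * (e * s * e) = e * s * e := by
    calc e * (e * s * e) = (e * e) * s * e := by simp [mul_assoc]
      _ = e * s * e := by rw [he]
  calc (e * c * e) * (e * s * e) = e * (c * (e * (e * s * e))) := by simp [mul_assoc]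
    _ = e * (c * (e * s * e)) := by rw [heu]
    _ = e * e := by rw [hc]
    _ = e := he

lemma isAtom_op_span (hsp : ∀ a : R, (∀ b : R, a * b * a = 0) → a = 0)
    {e : R} (he : e * e = e) (he0 : e ≠ 0) (hatom : IsAtom (span R ({e} : Set R))) :
    IsAtom (span Rᵐᵒᵖ ({e} : Set R)) := by
  have key : ∀ x : R, x ∈ span Rᵐᵒᵖ ({e} : Set R) → x ≠ 0 →
      span Rᵐᵒᵖ ({e} : Set R) ≤ span Rᵐᵒᵖ ({x} : Set R) := by
    intro x hx hx0
    obtain ⟨c, hc⟩ := Submodule.mem_span_singleton.mp hx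
    have hx_eq : x = e * unop c := by rw [← hc]; rfl
    set r := unop c with hr
    have hex : e * x = x := by rw [hx_eq, ← mul_assoc, he]
    have hb : ∃ b : R, x * b * e ≠ 0 := by
      by_contra hall
      push_neg at hall
      refine hx0 (hsp x fun b => ?_)
      have h2 : x * b * x = (x * b * e) * r := by
        rw [hx_eq]; simp [mul_assoc]
      rw [h2, hall b, zero_mul]
    obtain ⟨b, hb0⟩ := hb
    have hu_form : ∃ s : R, x * b * e = e * s * e := ⟨r * b, by rw [hx_eq]; simp [mul_assoc]⟩
    obtain ⟨w, hw_form, hwu⟩ := exists_left_inv hsp he hatom hu_form hb0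
    have hw0 : w ≠ 0 := by
      intro h
      rw [h, zero_mul] at hwu
      exact he0 hwu.symm
    obtain ⟨v, hv_form, hvw⟩ := exists_left_inv hsp he hatom hw_form hw0
    have heu : e * (x * b * e) = x * b * e := by
      obtain ⟨s, hs⟩ := hu_form
      rw [hs]
      calc e * (e * s * e) = (e * e) * s * e := by simp [mul_assoc]
        _ = e * s * e := by rw [he]
    have hve : v * e = v := by
      obtain ⟨t, rfl⟩ := hv_form
      calc (e * t * e) * e = e * t * (e * e) := by simp [mul_assoc]
        _ = e * t * e := by rw [he]
    have huv : x * b * e = v := by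
      calc x * b * e = e * (x * b * e) := heu.symm
        _ = (v * w) * (x * b * e) := by rw [hvw]
        _ = v * (w * (x * b * e)) := by rw [mul_assoc]
        _ = v * e := by rw [hwu]
        _ = v := hve
    have huw : (x * b * e) * w = e := by rw [huv, ← hvw]
    have he_eq : x * (b * (e * w)) = e := by
      calc x * (b * (e * w)) = (x * b * e) * w := by simp [mul_assoc]
        _ = e := huw
    have : e ∈ span Rᵐᵒᵖ ({x} : Set R) :=
      Submodule.mem_span_singleton.mpr ⟨op (b * (e * w)), by rw [op_smul_eq_mul, he_eq]⟩
    exact span_le.mpr (Set.singleton_subset_iff.mpr this)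
  constructor
  · intro h
    exact he0 (span_singleton_eq_bot.mp h)
  · intro N hN
    by_contra hNbot
    obtain ⟨x, hxN, hx0⟩ := Submodule.exists_mem_ne_zero_of_ne_bot hNbot
    have h1 : span Rᵐᵒᵖ ({e} : Set R) ≤ N :=
      le_trans (key x (hN.le hxN) hx0) (span_le.mpr (Set.singleton_subset_iff.mpr hxN))
    exact absurd (le_antisymm hN.le h1) hN.ne

lemma exists_idem_of_atom (hsp : ∀ a : R, (∀ b : R, a * b * a = 0) → a = 0)
    {L : Submodule R R} (hL : IsAtom L) :
    ∃ e : R, e * e = e ∧ e ≠ 0 ∧ L = span R ({e} : Set R) := by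
  obtain ⟨a, haL, ha⟩ : ∃ a ∈ L, Submodule.map (rmulHom a) L ≠ ⊥ := by
    by_contra hall
    push_neg at hall
    have hzero : ∀ x ∈ L, ∀ y ∈ L, x * y = 0 := by
      intro x hx y hy
      have h1 : x * y ∈ Submodule.map (rmulHom y) L := ⟨x, hx, rfl⟩
      rw [hall y hy] at h1
      simpa using h1
    obtain ⟨a, haL, ha0⟩ := Submodule.exists_mem_ne_zero_of_ne_bot hL.1
    refine ha0 (hsp a fun b => ?_)
    have hba : b * a ∈ L := by
      have := L.smul_mem b haL; rwa [smul_eq_mul] at this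
    rw [mul_assoc]
    exact hzero a haL _ hba
  have ha0 : a ≠ 0 := by
    rintro rfl
    refine ha (eq_bot_iff.mpr ?_)
    rintro x ⟨y, hy, rfl⟩
    exact (Submodule.mem_bot R).mpr (mul_zero y)
  have hmap_le : Submodule.map (rmulHom a) L ≤ L := by
    rintro x ⟨y, hy, rfl⟩
    have := L.smul_mem y haL
    rwa [smul_eq_mul] at this
  have hmap_eq : Submodule.map (rmulHom a) L = L := by
    rcases lt_or_eq_of_le hmap_le with hlt | h
    · exact absurd (hL.2 _ hlt) ha
    · exact h
  obtain ⟨e, heL, hea⟩ : ∃ e ∈ L, e * a = a := by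
    have : a ∈ Submodule.map (rmulHom a) L := hmap_eq.symm ▸ haL
    obtain ⟨e, heL, hh⟩ := this
    exact ⟨e, heL, hh⟩
  have haa : a ≠ 0 := ha0
  have hT : L ⊓ LinearMap.ker (rmulHom a) = ⊥ := by
    apply hL.2
    rcases lt_or_eq_of_le (inf_le_left : L ⊓ LinearMap.ker (rmulHom a) ≤ L) with hlt | heq
    · exact hlt
    · exfalso
      have heT : e ∈ L ⊓ LinearMap.ker (rmulHom a) := heq.symm ▸ heL
      have : e * a = 0 := heT.2
      rw [hea] at this
      exact haa this
  have hee : e * e = e := by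
    have hin : e * e - e ∈ L ⊓ LinearMap.ker (rmulHom a) := by
      constructor
      · exact sub_mem (by have := L.smul_mem e heL; rwa [smul_eq_mul] at this) heL
      · have : (e * e - e) * a = 0 := by
          rw [sub_mul, mul_assoc, hea, hea, sub_self]
        simpa [LinearMap.mem_ker] using this
    rw [hT] at hin
    exact sub_eq_zero.mp ((Submodule.mem_bot R).mp hin)
  have he0 : e ≠ 0 := by
    rintro rfl
    rw [zero_mul] at hea
    exact haa hea.symm
  refine ⟨e, hee, he0, ?_⟩
  have hle : span R ({e} : Set R) ≤ L := span_le.mpr (Set.singleton_subset_iff.mpr heL)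
  rcases lt_or_eq_of_le hle with hlt | h
  · exact absurd (span_singleton_eq_bot.mp (hL.2 _ hlt)) he0
  · exact h.symm

end Sym
section Sym2
variable {R : Type*} [Ring R]

/-- A semiprime left semisimple ring is right semisimple. -/
theorem isSemisimpleModule_op (hsp : ∀ a : R, (∀ b : R, a * b * a = 0) → a = 0)
    [IsSemisimpleRing R] : IsSemisimpleModule Rᵐᵒᵖ R := by
  have hsets : {m : Submodule Rᵐᵒᵖ R | IsSimpleModule Rᵐᵒᵖ m} =
      {N : Submodule Rᵐᵒᵖ R | IsAtom N} := by
    ext N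
    exact isSimpleModule_iff_isAtom
  have hstab : ∀ (r x : R), x ∈ modSoc Rᵐᵒᵖ R → r * x ∈ modSoc Rᵐᵒᵖ R := by
    intro r x hx
    have hmap : Submodule.map (lmulHom r) (modSoc Rᵐᵒᵖ R) ≤ modSoc Rᵐᵒᵖ R := by
      have h0 : modSoc Rᵐᵒᵖ R = ⨆ N : {N : Submodule Rᵐᵒᵖ R | IsAtom N}, (N : Submodule Rᵐᵒᵖ R) := by
        rw [modSoc, sSup_eq_iSup']
      conv_lhs => rw [h0]
      rw [Submodule.map_iSup]
      refine iSup_le fun N => ?_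
      rcases map_atom_or_bot (lmulHom r) N.2 with h | h
      · rw [h]; exact bot_le
      · exact le_sSup (show _ ∈ {N : Submodule Rᵐᵒᵖ R | IsAtom N} from h)
    exact hmap ⟨x, hx, rfl⟩
  have hC : ∀ x : R, x ∈ modSoc Rᵐᵒᵖ R := by
    let C : Submodule R R :=
      { carrier := (modSoc Rᵐᵒᵖ R : Set R)
        add_mem' := fun h1 h2 => (modSoc Rᵐᵒᵖ R).add_mem h1 h2
        zero_mem' := (modSoc Rᵐᵒᵖ R).zero_mem
        smul_mem' := fun r x hx => hstab r x hx }
    have hCtop : C = ⊤ := by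
      rw [eq_top_iff, ← IsSemisimpleModule.sSup_simples_eq_top R R]
      refine sSup_le fun L hL => ?_
      have hLatom : IsAtom L := isSimpleModule_iff_isAtom.mp hL
      obtain ⟨e, he, he0, rfl⟩ := exists_idem_of_atom hsp hLatom
      have hatomR : IsAtom (span Rᵐᵒᵖ ({e} : Set R)) := isAtom_op_span hsp he he0 hLatom
      have h1 : span Rᵐᵒᵖ ({e} : Set R) ≤ modSoc Rᵐᵒᵖ R :=
        le_sSup (show _ ∈ {N : Submodule Rᵐᵒᵖ R | IsAtom N} from hatomR)
      have heS : e ∈ modSoc Rᵐᵒᵖ R := h1 (Submodule.mem_span_singleton_self e)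
      exact span_le.mpr (Set.singleton_subset_iff.mpr heS)
    intro x
    have : x ∈ C := hCtop.symm ▸ Submodule.mem_top
    exact this
  apply IsSemisimpleModule.of_sSup_simples_eq_top
  rw [hsets]
  rw [eq_top_iff']
  exact hC

end Sym2
section Fwd
variable {R : Type*} [Ring R]

lemma modRad_small (h1 : IsFsModule Rᵐᵒᵖ R) : IsSmallSubmodule (modRad Rᵐᵒᵖ R) :=
  isSmall_sSup h1 fun _ hN => hN

lemma small_of_le_rad (h1 : IsFsModule Rᵐᵒᵖ R) {N : Submodule Rᵐᵒᵖ R}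
    (h : N ≤ modRad Rᵐᵒᵖ R) : IsSmallSubmodule N :=
  isSmall_of_le h (modRad_small h1)

lemma finite_below_rad (h1 : IsFsModule Rᵐᵒᵖ R) :
    {N : Submodule Rᵐᵒᵖ R | N ≤ modRad Rᵐᵒᵖ R}.Finite :=
  h1.subset fun _ hN => small_of_le_rad h1 hN

lemma eq_zero_of_eq_mul (h1 : IsFsModule Rᵐᵒᵖ R) {a k : R}
    (hk : k ∈ modRad Rᵐᵒᵖ R) (hak : a * k = a) : a = 0 := by
  have hsmall : IsSmallSubmodule (span Rᵐᵒᵖ ({k} : Set R)) :=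
    small_of_le_rad h1 (span_le.mpr (Set.singleton_subset_iff.mpr hk))
  have hsup : span Rᵐᵒᵖ ({k} : Set R) ⊔ span Rᵐᵒᵖ ({1 - k} : Set R) = ⊤ := by
    apply eq_top_of_one_mem
    have hmem : k + (1 - k) ∈ span Rᵐᵒᵖ ({k} : Set R) ⊔ span Rᵐᵒᵖ ({1 - k} : Set R) :=
      add_mem (Submodule.mem_sup_left (Submodule.mem_span_singleton_self k))
        (Submodule.mem_sup_right (Submodule.mem_span_singleton_self (1 - k)))
    rwa [add_sub_cancel] at hmem
  have htop := hsmall _ hsup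
  have h1mem : (1 : R) ∈ span Rᵐᵒᵖ ({1 - k} : Set R) := by rw [htop]; trivial
  obtain ⟨c, hc⟩ := Submodule.mem_span_singleton.mp h1mem
  have hc' : (1 - k) * unop c = 1 := hc
  calc a = a * ((1 - k) * unop c) := by rw [hc', mul_one]
    _ = (a * (1 - k)) * unop c := by rw [mul_assoc]
    _ = 0 := by rw [mul_sub, mul_one, hak, sub_self, zero_mul]

theorem exists_minimal_wrt_aux {α β : Type*} [PartialOrder β] (f : α → β) (s : Set α)
    (h : s.Finite) (hs : s.Nonempty) : ∃ a ∈ s, ∀ a' ∈ s, f a' ≤ f a → f a = f a' := by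
  obtain ⟨i, hi, hmin⟩ := h.exists_minimalFor f s hs
  exact ⟨i, hi, fun a' ha' hle => le_antisymm (hmin ha' hle) hle⟩

lemma modRad_eq_bot (h1 : IsFsModule Rᵐᵒᵖ R)
    (hsp : ∀ a : R, (∀ b : R, a * b * a = 0) → a = 0) : modRad Rᵐᵒᵖ R = ⊥ := by
  have hfin := finite_below_rad h1
  let P : ℕ → Submodule Rᵐᵒᵖ R := fun n => Nat.rec (modRad Rᵐᵒᵖ R) (fun _ Q => rmul Q Q) n
  have hPsucc : ∀ n, P (n + 1) = rmul (P n) (P n) := fun _ => rfl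
  have hPle : ∀ n, P n ≤ modRad Rᵐᵒᵖ R := by
    intro n; induction n with
    | zero => exact le_refl _
    | succ n ih => exact le_trans rmul_le_left ih
  obtain ⟨K, hKmem, hKmin⟩ := exists_minimal_wrt_aux id (Set.range P)
    (hfin.subset (by rintro _ ⟨n, rfl⟩; exact hPle n)) ⟨P 0, 0, rfl⟩
  obtain ⟨n, hKn⟩ := hKmem
  have hKle : K ≤ modRad Rᵐᵒᵖ R := hKn ▸ hPle n
  have hsucc_le : P (n + 1) ≤ K := by rw [hPsucc, hKn]; exact rmul_le_left
  have hKeq : K = P (n + 1) := hKmin _ ⟨n + 1, rfl⟩ hsucc_le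
  have hKK : rmul K K = K := by
    conv_lhs => rw [← hKn]
    rw [← hPsucc, ← hKeq]
  have hKbot : K = ⊥ := by
    by_contra hK0
    have hIset : {I : Submodule Rᵐᵒᵖ R | I ≤ modRad Rᵐᵒᵖ R ∧ rmul I K ≠ ⊥}.Finite :=
      hfin.subset fun _ hI => hI.1
    have hKin : K ∈ {I : Submodule Rᵐᵒᵖ R | I ≤ modRad Rᵐᵒᵖ R ∧ rmul I K ≠ ⊥} :=
      ⟨hKle, by rw [hKK]; exact hK0⟩
    obtain ⟨I, hImem, hImin⟩ := exists_minimal_wrt_aux id _ hIset ⟨K, hKin⟩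
    obtain ⟨hIle, hIK⟩ := hImem
    obtain ⟨a, haI, ha⟩ : ∃ a ∈ I, Submodule.map (lmulHom a) K ≠ ⊥ := by
      by_contra hall
      push_neg at hall
      refine hIK (eq_bot_iff.mpr (rmul_le fun x hx y hy => ?_))
      have hxy : x * y ∈ Submodule.map (lmulHom x) K := ⟨y, hy, rfl⟩
      rw [hall x hx] at hxy
      simpa using hxy
    have hIa_le : Submodule.map (lmulHom a) K ≤ I := by
      rintro x ⟨k, hk, rfl⟩
      simpa [op_smul_eq_mul] using I.smul_mem (op k) haI
    have hIa_rmul : rmul (Submodule.map (lmulHom a) K) K = Submodule.map (lmulHom a) K := by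
      rw [rmul_map_lmul, hKK]
    have hIa_mem : Submodule.map (lmulHom a) K ∈
        {I : Submodule Rᵐᵒᵖ R | I ≤ modRad Rᵐᵒᵖ R ∧ rmul I K ≠ ⊥} :=
      ⟨le_trans hIa_le hIle, by rw [hIa_rmul]; exact ha⟩
    have hIaI : I = Submodule.map (lmulHom a) K := hImin _ hIa_mem hIa_le
    obtain ⟨k, hkK, hak⟩ := hIaI ▸ haI
    have ha0 : a = 0 := eq_zero_of_eq_mul h1 (hKle hkK) hak
    refine ha (eq_bot_iff.mpr ?_)
    rintro x ⟨k', _, rfl⟩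
    simp [ha0]
  have hdesc : ∀ m, P m = ⊥ → P 0 = ⊥ := by
    intro m
    induction m with
    | zero => exact id
    | succ m ih =>
      intro hm
      apply ih
      rw [eq_bot_iff]
      intro x hx
      rw [Submodule.mem_bot]
      refine hsp x fun b => ?_
      have hxb : x * b ∈ P m := by
        simpa [op_smul_eq_mul] using (P m).smul_mem (op b) hx
      have hmem : x * b * x ∈ P (m + 1) := hPsucc m ▸ mul_mem_rmul hxb hx
      rw [hm] at hmem
      simpa using hmem
  exact hdesc n (hKn.trans hKbot)

lemma modRad'_eq_bot (h1 : IsFsModule Rᵐᵒᵖ R)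
    (hsp : ∀ a : R, (∀ b : R, a * b * a = 0) → a = 0) : modRad' Rᵐᵒᵖ R = ⊥ := by
  have hco : IsCoatomic (Submodule Rᵐᵒᵖ R) := CompleteLattice.coatomic_of_top_compact
    (by rw [← span_one_eq_top]; exact Submodule.singleton_span_isCompactElement 1)
  have hsmall : IsSmallSubmodule (modRad' Rᵐᵒᵖ R) := by
    intro A hA
    by_contra hAne
    rcases (hco.eq_top_or_exists_le_coatom A) with h | ⟨m, hm, hAm⟩
    · exact hAne h
    · have hJm : modRad' Rᵐᵒᵖ R ≤ m := sInf_le hm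
      have : (⊤ : Submodule Rᵐᵒᵖ R) ≤ m := hA ▸ sup_le hJm hAm
      exact hm.1 (top_le_iff.mp this)
  have h2 : modRad' Rᵐᵒᵖ R ≤ modRad Rᵐᵒᵖ R := le_sSup hsmall
  rw [modRad_eq_bot h1 hsp] at h2
  exact le_bot_iff.mp h2

end Fwd
section Main
variable {R : Type*} [Ring R]

/-- A finite intersection of maximal right ideals. -/
def GoodInf (N : Submodule Rᵐᵒᵖ R) : Prop :=
  ∃ s : Finset (Submodule Rᵐᵒᵖ R), (∀ m ∈ s, IsCoatom m) ∧ N = s.inf id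

lemma goodInf_top : GoodInf (⊤ : Submodule Rᵐᵒᵖ R) :=
  ⟨∅, fun m hm => absurd hm (Finset.notMem_empty m), by simp⟩

lemma goodInf_inf {N : Submodule Rᵐᵒᵖ R} (h : GoodInf N)
    {m : Submodule Rᵐᵒᵖ R} (hm : IsCoatom m) : GoodInf (N ⊓ m) := by
  classical
  obtain ⟨s, hs, rfl⟩ := h
  refine ⟨insert m s, fun m' hm' => ?_, ?_⟩
  · rcases Finset.mem_insert.mp hm' with h | h
    · exact h ▸ hm
    · exact hs m' h
  · rw [Finset.inf_insert, inf_comm]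
    rfl

theorem isSemisimpleModule_op_of_fs_hollow
    (hsp : ∀ a : R, (∀ b : R, a * b * a = 0) → a = 0)
    (h1 : IsFsModule Rᵐᵒᵖ R) (h2 : HasFiniteHollowDim Rᵐᵒᵖ R) :
    IsSemisimpleModule Rᵐᵒᵖ R := by
  classical
  have hrad' := modRad'_eq_bot h1 hsp
  have hgood : ∃ s : Finset (Submodule Rᵐᵒᵖ R),
      (∀ m ∈ s, IsCoatom m) ∧ s.inf id = ⊥ := by
    by_contra hc
    push_neg at hc
    have step : ∀ N : Submodule Rᵐᵒᵖ R, GoodInf N →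
        ∃ m : Submodule Rᵐᵒᵖ R, IsCoatom m ∧ ¬ N ≤ m := by
      rintro N ⟨s, hs, hNs⟩
      by_contra hall
      push_neg at hall
      have hN0 : N ≤ sInf {m : Submodule Rᵐᵒᵖ R | IsCoatom m} :=
        le_sInf fun m hm => hall m hm
      rw [show sInf {m : Submodule Rᵐᵒᵖ R | IsCoatom m} = modRad' Rᵐᵒᵖ R from rfl,
        hrad'] at hN0
      exact hc s hs (by rw [← hNs]; exact le_bot_iff.mp hN0)
    choose f hf1 hf2 using step
    let F : {N : Submodule Rᵐᵒᵖ R // GoodInf N} → {N : Submodule Rᵐᵒᵖ R // GoodInf N} :=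
      fun p => ⟨p.1 ⊓ f p.1 p.2, goodInf_inf p.2 (hf1 _ _)⟩
    let seq : ℕ → {N : Submodule Rᵐᵒᵖ R // GoodInf N} := fun n =>
      Nat.rec ⟨⊤, goodInf_top⟩ (fun _ p => F p) n
    let N' : ℕ → Submodule Rᵐᵒᵖ R := fun k => (seq k).1
    have hsucc : ∀ k, N' (k + 1) = N' k ⊓ f (N' k) (seq k).2 := fun _ => rfl
    have hmono : ∀ i j, i ≤ j → N' j ≤ N' i :=
      fun i j hij =>
        antitone_nat_of_succ_le (fun k => le_of_eq_of_le (hsucc k) inf_le_left) hij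
    obtain ⟨n, hn⟩ := h2 N' hmono
    have hk := hn (n + 1) (Nat.le_succ n)
    have hm : IsCoatom (f (N' n) (seq n).2) := hf1 _ _
    have hnotle : ¬ N' n ≤ f (N' n) (seq n).2 := hf2 _ _
    have hsup_top : N' n ⊔ f (N' n) (seq n).2 = ⊤ :=
      hm.2 _ (lt_of_le_of_ne le_sup_right fun h => hnotle (h ▸ le_sup_left))
    have hmap : Submodule.map (N' (n + 1)).mkQ (N' n) ⊔
        Submodule.map (N' (n + 1)).mkQ (f (N' n) (seq n).2) = ⊤ := by
      rw [← Submodule.map_sup, hsup_top, Submodule.map_top, Submodule.range_mkQ]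
    have htop := hk _ hmap
    have hcm : f (N' n) (seq n).2 ⊔ N' (n + 1) = ⊤ := by
      have h3 := congrArg (Submodule.comap (N' (n + 1)).mkQ) htop
      rw [Submodule.comap_map_eq, Submodule.comap_top, Submodule.ker_mkQ] at h3
      exact h3
    have hNle : N' (n + 1) ≤ f (N' n) (seq n).2 :=
      le_of_eq_of_le (hsucc n) inf_le_right
    rw [sup_eq_left.mpr hNle] at hcm
    exact hm.1 hcm
  obtain ⟨s, hs_co, hs_inf⟩ := hgood
  let g : R →ₗ[Rᵐᵒᵖ] ((i : s) → R ⧸ (i : Submodule Rᵐᵒᵖ R)) :=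
    LinearMap.pi fun i => (i : Submodule Rᵐᵒᵖ R).mkQ
  have hinf : (⨅ i : {x // x ∈ s}, (i : Submodule Rᵐᵒᵖ R)) = ⊥ := by
    rw [eq_bot_iff, ← hs_inf]
    exact Finset.le_inf fun m hm =>
      iInf_le (fun i : {x // x ∈ s} => (i : Submodule Rᵐᵒᵖ R)) ⟨m, hm⟩
  have hker : LinearMap.ker g = ⊥ := by
    rw [LinearMap.ker_pi]
    simpa [Submodule.ker_mkQ] using hinf
  have hinj : Function.Injective g := LinearMap.ker_eq_bot.mp hker
  haveI hsimp : ∀ i : s, IsSemisimpleModule Rᵐᵒᵖ (R ⧸ (i : Submodule Rᵐᵒᵖ R)) := fun i =>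
    isSemisimple_of_isSimple (isSimpleModule_iff_isCoatom.mpr (hs_co i i.2))
  haveI hpi : IsSemisimpleModule Rᵐᵒᵖ ((i : s) → R ⧸ (i : Submodule Rᵐᵒᵖ R)) :=
    isSemisimple_pi _ hsimp
  exact IsSemisimpleModule.congr (M := ↥(LinearMap.range g)) (LinearEquiv.ofInjective g hinj)

end Main
section Final
variable {R : Type*} [Ring R]

lemma hsp_op (hsp : ∀ a : R, (∀ b : R, a * b * a = 0) → a = 0) :
    ∀ a : Rᵐᵒᵖ, (∀ b : Rᵐᵒᵖ, a * b * a = 0) → a = 0 := by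
  intro a ha
  rw [← op_unop a, ← op_zero]
  congr 1
  refine hsp (unop a) fun b => ?_
  have := ha (op b)
  have h2 : unop (a * op b * a) = unop a * b * unop a := by
    simp [mul_assoc]
  rw [this] at h2
  simpa using h2.symm

/-- Transfer right-module semisimplicity to `IsSemisimpleRing Rᵐᵒᵖ`. -/
lemma isSemisimpleRing_op_of_module (h : IsSemisimpleModule Rᵐᵒᵖ R) :
    IsSemisimpleRing Rᵐᵒᵖ := by
  haveI := h
  exact IsSemisimpleModule.congr (M := R) (_root_.opEquiv R).symm

lemma isSemisimpleModule_of_ring_op (h : IsSemisimpleRing Rᵐᵒᵖ) :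
    IsSemisimpleModule Rᵐᵒᵖ R := by
  haveI := h
  exact IsSemisimpleModule.congr (M := Rᵐᵒᵖ) (_root_.opEquiv R)

theorem semiprime_fs_finite_hollow_iff_semisimple' (R : Type*) [Ring R]
    (hsp : ∀ a : R, (∀ b : R, a * b * a = 0) → a = 0) :
    (IsFsModule Rᵐᵒᵖ R ∧ HasFiniteHollowDim Rᵐᵒᵖ R) ↔ IsSemisimpleRing R := by
  constructor
  · rintro ⟨h1, h2⟩
    have hmod : IsSemisimpleModule Rᵐᵒᵖ R := isSemisimpleModule_op_of_fs_hollow hsp h1 h2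
    haveI hop : IsSemisimpleRing Rᵐᵒᵖ := isSemisimpleRing_op_of_module hmod
    have hmod2 : IsSemisimpleModule Rᵐᵒᵖᵐᵒᵖ Rᵐᵒᵖ := isSemisimpleModule_op (hsp_op hsp)
    haveI hopop : IsSemisimpleRing Rᵐᵒᵖᵐᵒᵖ := isSemisimpleRing_op_of_module hmod2
    exact (ringEquivOpOp R).symm.isSemisimpleRing
  · intro hss
    haveI := hss
    have hmod : IsSemisimpleModule Rᵐᵒᵖ R := isSemisimpleModule_op hsp
    haveI := hmod
    constructor
    · -- fs: the only small submodule is ⊥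
      refine Set.Finite.subset (Set.finite_singleton ⊥) ?_
      intro N hN
      obtain ⟨A, hA⟩ := exists_isCompl N
      have hAtop : A = ⊤ := hN A (by rw [← codisjoint_iff.mp hA.codisjoint])
      have : Disjoint N (⊤ : Submodule Rᵐᵒᵖ R) := hAtop ▸ hA.disjoint
      simpa using disjoint_top.mp this
    · -- hollow: chains stabilize since R is right artinian
      haveI hop : IsSemisimpleRing Rᵐᵒᵖ := isSemisimpleRing_op_of_module hmod
      haveI hart : IsArtinian Rᵐᵒᵖ Rᵐᵒᵖ := inferInstance
      haveI hartR : IsArtinian Rᵐᵒᵖ R := isArtinian_of_linearEquiv (_root_.opEquiv R).symm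
      intro N hmono
      obtain ⟨n, hn⟩ := IsArtinian.monotone_stabilizes
        (⟨fun k => OrderDual.toDual (N k), fun i j hij => hmono i j hij⟩ :
          ℕ →o (Submodule Rᵐᵒᵖ R)ᵒᵈ)
      refine ⟨n, fun k hk => ?_⟩
      have hNk : N n = N k := hn k hk
      have hmap : Submodule.map (N k).mkQ (N n) = ⊥ := by
        rw [hNk, eq_bot_iff]
        rintro x ⟨y, hy, rfl⟩
        rw [Submodule.mem_bot, Submodule.mkQ_apply, Submodule.Quotient.mk_eq_zero]
        exact hy
      rw [hmap]
      exact isSmall_bot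

end Final
theorem semiprime_fs_finite_hollow_iff_semisimple (R : Type*) [Ring R]
    (hsp : ∀ a : R, (∀ b : R, a * b * a = 0) → a = 0) :
    (IsFsModule Rᵐᵒᵖ R ∧ HasFiniteHollowDim Rᵐᵒᵖ R) ↔ IsSemisimpleRing R :=
  semiprime_fs_finite_hollow_iff_semisimple' R hsp
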